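/- Let {λ_k}_{k∈M} and {μ_k}_{k∈M} be real sequences indexed by a set M of consecutive integers, without finite accumulation points, such that the series Σ_{k∈M}(μ_k - λ_k) converges absolutely. Then the infinite product Π_{k∈M} (ζ - μ_k)/(ζ - λ_k) converges uniformly on compact subsets of ℂ \ ℝ, and its limit as ζ → ∞ along any ray with Im ζ ≥ ε > 0 equals 1. -/

import Mathlib

open Filter Finset Topology

section aux
variable {ι α : Type*}


lemma aux_norm_prod_le (s : Finset ι) (v : ι → ℂ) :
    ‖∏ k ∈ s, (1 + v k)‖ ≤ ∏ k ∈ s, (1 + ‖v k‖) := by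
  calc ‖∏ k ∈ s, (1 + v k)‖ = ∏ k ∈ s, ‖1 + v k‖ := by
        rw [norm_prod]
  _ ≤ ∏ k ∈ s, (1 + ‖v k‖) :=
      Finset.prod_le_prod (fun k _ => norm_nonneg _)
        (fun k _ => by simpa using norm_add_le (1 : ℂ) (v k))

lemma aux_norm_prod_sub_one_le (s : Finset ι) (v : ι → ℂ) :
    ‖(∏ k ∈ s, (1 + v k)) - 1‖ ≤ (∏ k ∈ s, (1 + ‖v k‖)) - 1 := by
  classical
  induction s using Finset.cons_induction with
  | empty => simp
  | cons a s ha ih =>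
    have h1 : (∏ k ∈ Finset.cons a s ha, (1 + v k)) - 1
        = ((∏ k ∈ s, (1 + v k)) - 1) + v a * ∏ k ∈ s, (1 + v k) := by
      rw [Finset.prod_cons]; ring
    have h2 : ‖(∏ k ∈ Finset.cons a s ha, (1 + v k)) - 1‖
        ≤ ((∏ k ∈ s, (1 + ‖v k‖)) - 1) + ‖v a‖ * ∏ k ∈ s, (1 + ‖v k‖) := by
      rw [h1]
      refine (norm_add_le _ _).trans (add_le_add ih ?_)
      rw [norm_mul]
      exact mul_le_mul_of_nonneg_left (aux_norm_prod_le s v) (norm_nonneg _)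
    calc ‖(∏ k ∈ Finset.cons a s ha, (1 + v k)) - 1‖
        ≤ ((∏ k ∈ s, (1 + ‖v k‖)) - 1) + ‖v a‖ * ∏ k ∈ s, (1 + ‖v k‖) := h2
      _ = (∏ k ∈ Finset.cons a s ha, (1 + ‖v k‖)) - 1 := by rw [Finset.prod_cons]; ring

lemma aux_prod_one_add_le_exp (s : Finset ι) (b : ι → ℝ) (hb : ∀ k, 0 ≤ b k) :
    ∏ k ∈ s, (1 + b k) ≤ Real.exp (∑ k ∈ s, b k) := by
  rw [Real.exp_sum]
  exact Finset.prod_le_prod (fun k hk => by linarith [hb k])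
    (fun k _ => by linarith [Real.add_one_le_exp (b k)])

lemma aux_key [DecidableEq ι] {K : Set α} (u : ι → α → ℂ) (a : ι → ℝ) (ha : Summable a)
    (ha0 : ∀ k, 0 ≤ a k) (hb : ∀ k, ∀ x ∈ K, ‖u k x‖ ≤ a k) :
    (∀ x ∈ K, Multipliable fun k => 1 + u k x) ∧
    TendstoUniformlyOn (fun (s : Finset ι) x => ∏ k ∈ s, (1 + u k x))
      (fun x => ∏' k, (1 + u k x)) atTop K := by
  set A := ∑' k, a k with hAdef
  have hnormle : ∀ (s : Finset ι), ∀ x ∈ K, ‖∏ k ∈ s, (1 + u k x)‖ ≤ Real.exp A := by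
    intro s x hx
    calc ‖∏ k ∈ s, (1 + u k x)‖ ≤ ∏ k ∈ s, (1 + ‖u k x‖) := aux_norm_prod_le s _
      _ ≤ ∏ k ∈ s, (1 + a k) :=
          Finset.prod_le_prod (fun k _ => by positivity) (fun k _ => by linarith [hb k x hx])
      _ ≤ Real.exp (∑ k ∈ s, a k) := aux_prod_one_add_le_exp s a ha0
      _ ≤ Real.exp A := Real.exp_le_exp.2 (Summable.sum_le_tsum s (fun k _ => ha0 k) ha)
  have hsub1 : ∀ (s : Finset ι), ∀ x ∈ K,
      ‖(∏ k ∈ s, (1 + u k x)) - 1‖ ≤ Real.exp (∑ k ∈ s, a k) - 1 := by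
    intro s x hx
    calc ‖(∏ k ∈ s, (1 + u k x)) - 1‖ ≤ (∏ k ∈ s, (1 + ‖u k x‖)) - 1 :=
          aux_norm_prod_sub_one_le s _
      _ ≤ (∏ k ∈ s, (1 + a k)) - 1 := by
          have := Finset.prod_le_prod (f := fun k => 1 + ‖u k x‖) (g := fun k => 1 + a k)
            (s := s) (fun k _ => by positivity) (fun k _ => by linarith [hb k x hx])
          linarith
      _ ≤ Real.exp (∑ k ∈ s, a k) - 1 := by linarith [aux_prod_one_add_le_exp s a ha0]
  have key_est : ∀ (r s : Finset ι), s ⊆ r → ∀ x ∈ K,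
      ‖(∏ k ∈ r, (1 + u k x)) - ∏ k ∈ s, (1 + u k x)‖
        ≤ Real.exp A * (Real.exp (∑ k ∈ r \ s, a k) - 1) := by
    intro r s hsr x hx
    have hprod : (∏ k ∈ r, (1 + u k x))
        = (∏ k ∈ s, (1 + u k x)) * ∏ k ∈ r \ s, (1 + u k x) := by
      rw [mul_comm, Finset.prod_sdiff hsr]
    have heq : (∏ k ∈ r, (1 + u k x)) - ∏ k ∈ s, (1 + u k x)
        = (∏ k ∈ s, (1 + u k x)) * ((∏ k ∈ r \ s, (1 + u k x)) - 1) := by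
      rw [hprod]; ring
    rw [heq, norm_mul]
    have h1 := hnormle s x hx
    have h2 := hsub1 (r \ s) x hx
    have h3 : (0:ℝ) ≤ Real.exp (∑ k ∈ r \ s, a k) - 1 := by
      have : (0:ℝ) ≤ ∑ k ∈ r \ s, a k := Finset.sum_nonneg fun k _ => ha0 k
      linarith [Real.one_le_exp this]
    exact mul_le_mul h1 h2 (norm_nonneg _) (Real.exp_pos A).le
  have hcauchy : UniformCauchySeqOn (fun (s : Finset ι) x => ∏ k ∈ s, (1 + u k x)) atTop K := by
    rw [Metric.uniformCauchySeqOn_iff]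
    intro ε hε
    set δ := Real.log (1 + ε / (2 * Real.exp A)) with hδdef
    have hpos : 0 < ε / (2 * Real.exp A) := by positivity
    have hδ : 0 < δ := Real.log_pos (by linarith)
    have hexpδ : Real.exp δ = 1 + ε / (2 * Real.exp A) := Real.exp_log (by linarith)
    obtain ⟨N, hN⟩ := Filter.eventually_atTop.1
      (Metric.tendsto_nhds.1 ha.hasSum (δ / 2) (by linarith))
    have htail : ∀ t : Finset ι, Disjoint t N → ∑ k ∈ t, a k < δ := by
      intro t hdisj
      have h1 : dist (∑ k ∈ t ∪ N, a k) A < δ / 2 := hN _ Finset.subset_union_right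
      have h2 : dist (∑ k ∈ N, a k) A < δ / 2 := hN _ le_rfl
      have h3 : ∑ k ∈ t ∪ N, a k = ∑ k ∈ t, a k + ∑ k ∈ N, a k := Finset.sum_union hdisj
      rw [Real.dist_eq] at h1 h2
      have := abs_lt.1 h1
      have := abs_lt.1 h2
      linarith [abs_lt.1 h1, abs_lt.1 h2]
    refine ⟨N, fun s hs t ht x hx => ?_⟩
    have hbound : ∀ r q : Finset ι, q ⊆ r → Disjoint (r \ q) N →
        dist (∏ k ∈ r, (1 + u k x)) (∏ k ∈ q, (1 + u k x)) < ε / 2 := by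
      intro r q hqr hdisj
      rw [dist_eq_norm]
      refine lt_of_le_of_lt (key_est r q hqr x hx) ?_
      have h4 : Real.exp (∑ k ∈ r \ q, a k) < Real.exp δ :=
        Real.exp_lt_exp.2 (htail _ hdisj)
      have h5 : Real.exp A * (Real.exp (∑ k ∈ r \ q, a k) - 1)
          < Real.exp A * (Real.exp δ - 1) := by nlinarith [Real.exp_pos A]
      calc Real.exp A * (Real.exp (∑ k ∈ r \ q, a k) - 1)
          < Real.exp A * (Real.exp δ - 1) := h5
        _ = ε / 2 := by rw [hexpδ]; field_simp; ring
    have d1 := hbound (s ∪ t) s Finset.subset_union_left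
      (Finset.sdiff_disjoint.mono_right hs)
    have d2 := hbound (s ∪ t) t Finset.subset_union_right
      (Finset.sdiff_disjoint.mono_right ht)
    calc dist (∏ k ∈ s, (1 + u k x)) (∏ k ∈ t, (1 + u k x))
        ≤ dist (∏ k ∈ s, (1 + u k x)) (∏ k ∈ s ∪ t, (1 + u k x))
          + dist (∏ k ∈ s ∪ t, (1 + u k x)) (∏ k ∈ t, (1 + u k x)) := dist_triangle _ _ _
      _ < ε / 2 + ε / 2 := by rw [dist_comm (∏ k ∈ s, (1 + u k x))]; exact add_lt_add d1 d2
      _ = ε := by ring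
  have hmul : ∀ x ∈ K, Multipliable fun k => 1 + u k x := by
    intro x hx
    have hc : CauchySeq (fun s : Finset ι => ∏ k ∈ s, (1 + u k x)) := by
      rw [Metric.cauchySeq_iff]
      intro ε hε
      obtain ⟨N, hN⟩ := Metric.uniformCauchySeqOn_iff.1 hcauchy ε hε
      exact ⟨N, fun m hm n hn => hN m hm n hn x hx⟩
    obtain ⟨p, hp⟩ := cauchySeq_tendsto_of_complete hc
    exact ⟨p, hp⟩
  exact ⟨hmul, hcauchy.tendstoUniformlyOn_of_tendsto fun x hx => (hmul x hx).hasProd⟩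

lemma aux_norm_tprod_sub_one_le {v : ι → ℂ} {b : ι → ℝ} (hb : Summable b)
    (h0 : ∀ k, ‖v k‖ ≤ b k) (hm : Multipliable fun k => 1 + v k) :
    ‖(∏' k, (1 + v k)) - 1‖ ≤ Real.exp (∑' k, b k) - 1 := by
  have hb0 : ∀ k, 0 ≤ b k := fun k => le_trans (norm_nonneg _) (h0 k)
  have ht : Tendsto (fun s : Finset ι => ‖(∏ k ∈ s, (1 + v k)) - 1‖) atTop
      (𝓝 ‖(∏' k, (1 + v k)) - 1‖) := (hm.hasProd.sub tendsto_const_nhds).norm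
  refine le_of_tendsto ht (Filter.Eventually.of_forall fun s => ?_)
  calc ‖(∏ k ∈ s, (1 + v k)) - 1‖ ≤ (∏ k ∈ s, (1 + ‖v k‖)) - 1 :=
        aux_norm_prod_sub_one_le s _
    _ ≤ (∏ k ∈ s, (1 + b k)) - 1 := by
        have := Finset.prod_le_prod (f := fun k => 1 + ‖v k‖) (g := fun k => 1 + b k)
          (s := s) (fun k _ => by positivity) (fun k _ => by linarith [h0 k])
        linarith
    _ ≤ Real.exp (∑ k ∈ s, b k) - 1 := by linarith [aux_prod_one_add_le_exp s b hb0]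
    _ ≤ Real.exp (∑' k, b k) - 1 := by
        have := Real.exp_le_exp.2 (Summable.sum_le_tsum s (fun k _ => hb0 k) hb)
        linarith
end aux

/-- uniform convergence of the product on compacts of ℂ \ ℝ and
limit 1 at infinity in half planes Im ζ ≥ ε. -/
theorem stmt_3 (lam mu : ℤ → ℝ)
    (hinj : Function.Injective lam)
    (hacc : ∀ C : ℝ, {k : ℤ | |lam k| ≤ C}.Finite)
    (hsum : Summable fun k => |mu k - lam k|) :
    (∀ K : Set ℂ, IsCompact K → (∀ ζ ∈ K, ζ.im ≠ 0) →
      TendstoUniformlyOn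
        (fun (s : Finset ℤ) (ζ : ℂ) => ∏ k ∈ s, (ζ - (mu k : ℂ)) / (ζ - (lam k : ℂ)))
        (fun ζ : ℂ => ∏' k : ℤ, (ζ - (mu k : ℂ)) / (ζ - (lam k : ℂ)))
        atTop K) ∧
    (∀ ε > (0 : ℝ),
      Tendsto (fun ζ : ℂ => ∏' k : ℤ, (ζ - (mu k : ℂ)) / (ζ - (lam k : ℂ)))
        (comap (fun z : ℂ => ‖z‖) atTop ⊓ 𝓟 {ζ : ℂ | ε ≤ ζ.im}) (nhds 1)) := by
  set u : ℤ → ℂ → ℂ := fun k ζ => ((lam k : ℂ) - mu k) / (ζ - lam k) with hu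
  have hfac : ∀ (k : ℤ) (ζ : ℂ), ζ.im ≠ 0 →
      (ζ - (mu k : ℂ)) / (ζ - (lam k : ℂ)) = 1 + u k ζ := by
    intro k ζ him
    have h0 : ζ - (lam k : ℂ) ≠ 0 := by
      intro hh
      apply him
      have := congrArg Complex.im hh
      simpa using this
    rw [hu]
    field_simp
    ring
  have hnormu : ∀ (k : ℤ) (ζ : ℂ), ‖u k ζ‖ = |mu k - lam k| / ‖ζ - (lam k : ℂ)‖ := by
    intro k ζ
    rw [hu]
    simp only [norm_div]
    congr 1
    rw [show ((lam k : ℂ) - mu k) = ((lam k - mu k : ℝ) : ℂ) by push_cast; ring,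
      Complex.norm_real, Real.norm_eq_abs, abs_sub_comm]
  have hlow : ∀ (k : ℤ) (ζ : ℂ), |ζ.im| ≤ ‖ζ - (lam k : ℂ)‖ := by
    intro k ζ
    have h1 : (ζ - (lam k : ℂ)).im = ζ.im := by simp
    calc |ζ.im| = |(ζ - (lam k : ℂ)).im| := by rw [h1]
      _ ≤ ‖ζ - (lam k : ℂ)‖ := Complex.abs_im_le_norm _
      _ = ‖ζ - (lam k : ℂ)‖ := rfl
  constructor
  · -- Part 1: uniform convergence on compacts
    intro K hK hKim
    obtain ⟨δ, hδ, hmin⟩ := hK.exists_forall_le'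
      ((_root_.continuous_abs.comp Complex.continuous_im).continuousOn)
      (fun ζ hζ => abs_pos.2 (hKim ζ hζ))
    have hb : ∀ (k : ℤ), ∀ ζ ∈ K, ‖u k ζ‖ ≤ |mu k - lam k| / δ := by
      intro k ζ hζ
      rw [hnormu]
      exact div_le_div_of_nonneg_left (abs_nonneg _) hδ (le_trans (hmin ζ hζ) (hlow k ζ))
    obtain ⟨hmul, hTU⟩ := aux_key u (fun k => |mu k - lam k| / δ)
      (hsum.div_const δ) (fun k => by positivity) hb
    have hTU' := hTU.congr (F' := fun (s : Finset ℤ) (ζ : ℂ) =>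
        ∏ k ∈ s, (ζ - (mu k : ℂ)) / (ζ - (lam k : ℂ)))
      (Filter.Eventually.of_forall fun s ζ hζ =>
        Finset.prod_congr rfl fun k _ => (hfac k ζ (hKim ζ hζ)).symm)
    exact hTU'.congr_right fun ζ hζ =>
      (tprod_congr fun k => (hfac k ζ (hKim ζ hζ)).symm).symm ▸ rfl
  · -- Part 2: limit 1 at infinity in half planes
    intro ε hε
    set l := comap (fun z : ℂ => ‖z‖) atTop ⊓ 𝓟 {ζ : ℂ | ε ≤ ζ.im} with hl
    set S : Set ℂ := {ζ : ℂ | ε ≤ ζ.im} with hSdef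
    have hSim : ∀ ζ ∈ S, ζ.im ≠ 0 := by
      intro ζ hζ h
      rw [hSdef] at hζ
      simp only [Set.mem_setOf_eq, h] at hζ
      linarith
    have hbS : ∀ (k : ℤ), ∀ ζ ∈ S, ‖u k ζ‖ ≤ |mu k - lam k| / ε := by
      intro k ζ hζ
      rw [hnormu]
      refine div_le_div_of_nonneg_left (abs_nonneg _) hε ?_
      calc ε ≤ ζ.im := hζ
        _ ≤ |ζ.im| := le_abs_self _
        _ ≤ ‖ζ - (lam k : ℂ)‖ := hlow k ζ
    obtain ⟨hmulS, -⟩ := aux_key u (fun k => |mu k - lam k| / ε)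
      (hsum.div_const ε) (fun k => by positivity) hbS
    have hsumu : ∀ ζ ∈ S, Summable fun k => ‖u k ζ‖ := fun ζ hζ =>
      Summable.of_nonneg_of_le (fun k => norm_nonneg _) (fun k => hbS k ζ hζ)
        (hsum.div_const ε)
    set T : ℂ → ℝ := fun ζ => ∑' k, ‖u k ζ‖ with hT
    have hbound : ∀ ζ ∈ S,
        ‖(∏' k : ℤ, (ζ - (mu k : ℂ)) / (ζ - (lam k : ℂ))) - 1‖ ≤ Real.exp (T ζ) - 1 := by
      intro ζ hζ
      rw [tprod_congr fun k => hfac k ζ (hSim ζ hζ)]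
      exact aux_norm_tprod_sub_one_le (hsumu ζ hζ) (fun k => le_rfl) (hmulS ζ hζ)
    -- T tends to 0 along l
    have hT0 : Tendsto T l (𝓝 0) := by
      rw [Metric.tendsto_nhds]
      intro η hη
      set C := ∑' k, |mu k - lam k| with hC
      have hC0 : 0 ≤ C := tsum_nonneg fun k => abs_nonneg _
      obtain ⟨N, hN⟩ := Filter.eventually_atTop.1
        (Metric.tendsto_nhds.1 hsum.hasSum (ε * η / 4) (by positivity))
      have htail : ∑' k : ((N : Set ℤ)ᶜ : Set ℤ), |mu k - lam k| < ε * η / 4 := by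
        have h1 := Summable.sum_add_tsum_compl (s := N) hsum
        have h2 := hN N le_rfl
        rw [Real.dist_eq] at h2
        have := abs_lt.1 h2
        linarith
      set P := ∑ k ∈ N, |lam k| with hP
      have hP0 : 0 ≤ P := Finset.sum_nonneg fun k _ => abs_nonneg _
      set R := P + 4 * (C + 1) / η with hR
      have hmemR : {ζ : ℂ | R ≤ ‖ζ‖} ∈ l :=
        mem_inf_of_left (preimage_mem_comap (Ici_mem_atTop R))
      have hmemS : S ∈ l := mem_inf_of_right (mem_principal_self _)
      filter_upwards [hmemR, hmemS] with ζ hζR hζS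
      have hζnorm : R ≤ ‖ζ‖ := by exact hζR
      have hden : ∀ k ∈ N, ‖ζ‖ - P ≤ ‖ζ - (lam k : ℂ)‖ := by
        intro k hk
        have h1 : ‖(lam k : ℂ)‖ ≤ P := by
          rw [Complex.norm_real, Real.norm_eq_abs]
          exact Finset.single_le_sum (f := fun k => |lam k|)
            (fun k _ => abs_nonneg _) hk
        calc ‖ζ‖ - P ≤ ‖ζ‖ - ‖(lam k : ℂ)‖ := by linarith
          _ ≤ ‖ζ - (lam k : ℂ)‖ := norm_sub_norm_le _ _
      have hgap : 4 * (C + 1) / η ≤ ‖ζ‖ - P := by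
        rw [hR] at hζnorm; linarith
      have hgap0 : 0 < ‖ζ‖ - P := lt_of_lt_of_le (by positivity) hgap
      -- split T
      have hsplit := Summable.sum_add_tsum_compl (s := N) (hsumu ζ hζS)
      have hhead : ∑ k ∈ N, ‖u k ζ‖ < η / 2 := by
        have h1 : ∑ k ∈ N, ‖u k ζ‖ ≤ ∑ k ∈ N, |mu k - lam k| / (‖ζ‖ - P) := by
          refine Finset.sum_le_sum fun k hk => ?_
          rw [hnormu]
          exact div_le_div_of_nonneg_left (abs_nonneg _) hgap0 (hden k hk)
        have h2 : ∑ k ∈ N, |mu k - lam k| / (‖ζ‖ - P)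
            = (∑ k ∈ N, |mu k - lam k|) / (‖ζ‖ - P) := by
          rw [Finset.sum_div]
        have h3 : (∑ k ∈ N, |mu k - lam k|) ≤ C :=
          Summable.sum_le_tsum N (fun k _ => abs_nonneg _) hsum
        have h4 : (∑ k ∈ N, |mu k - lam k|) / (‖ζ‖ - P) ≤ C / (‖ζ‖ - P) := by
          gcongr
        have h5 : C / (‖ζ‖ - P) ≤ C / (4 * (C + 1) / η) := by
          exact div_le_div_of_nonneg_left hC0 (by positivity) hgap
        have h6 : C / (4 * (C + 1) / η) < η / 2 := by
          rw [div_div_eq_mul_div, div_lt_iff₀ (by positivity)]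
          nlinarith
        linarith
      have htailu : ∑' k : ((N : Set ℤ)ᶜ : Set ℤ), ‖u k ζ‖ < η / 2 := by
        have h1 : ∑' k : ((N : Set ℤ)ᶜ : Set ℤ), ‖u k ζ‖
            ≤ ∑' k : ((N : Set ℤ)ᶜ : Set ℤ), |mu (k : ℤ) - lam (k : ℤ)| / ε := by
          refine Summable.tsum_le_tsum (fun k => hbS k ζ hζS) ((hsumu ζ hζS).subtype _)
            ((hsum.div_const ε).subtype _)
        have h2 : ∑' k : ((N : Set ℤ)ᶜ : Set ℤ), |mu (k : ℤ) - lam (k : ℤ)| / ε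
            = (∑' k : ((N : Set ℤ)ᶜ : Set ℤ), |mu (k : ℤ) - lam (k : ℤ)|) / ε := by
          exact tsum_div_const
        have h3 : (∑' k : ((N : Set ℤ)ᶜ : Set ℤ), |mu (k : ℤ) - lam (k : ℤ)|) / ε
            < (ε * η / 4) / ε := (div_lt_div_iff_of_pos_right hε).2 htail
        have h4 : (ε * η / 4) / ε = η / 4 := by field_simp
        linarith
      have hTval : T ζ = ∑ k ∈ N, ‖u k ζ‖ + ∑' k : ((N : Set ℤ)ᶜ : Set ℤ), ‖u k ζ‖ := by
        rw [hT]; exact hsplit.symm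
      have hTnn : 0 ≤ T ζ := tsum_nonneg fun k => norm_nonneg _
      rw [Real.dist_eq, sub_zero, abs_of_nonneg hTnn, hTval]
      linarith
    -- conclude
    have hexp : Tendsto (fun ζ => Real.exp (T ζ) - 1) l (𝓝 0) := by
      have h1 : Tendsto (fun ζ => Real.exp (T ζ)) l (𝓝 1) := by
        have := (Real.continuous_exp.tendsto 0).comp hT0
        simpa [Function.comp_def] using this
      simpa using h1.sub_const 1
    rw [Metric.tendsto_nhds]
    intro η hη
    have hmemS : S ∈ l := mem_inf_of_right (mem_principal_self _)
    filter_upwards [hexp.eventually (gt_mem_nhds hη), hmemS] with ζ h1 h2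
    calc dist (∏' k : ℤ, (ζ - (mu k : ℂ)) / (ζ - (lam k : ℂ))) 1
        = ‖(∏' k : ℤ, (ζ - (mu k : ℂ)) / (ζ - (lam k : ℂ))) - 1‖ := dist_eq_norm _ _
      _ ≤ Real.exp (T ζ) - 1 := hbound ζ h2
      _ < η := h1
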